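/- Let X be a discrete random variable with pmf p and finite mean. Then the following are equivalent: (a) X ∼ CO(μ; q) for some μ ∈ ℝ and some polynomial q of degree at most two; (b) (i) the support S of X is an integer chain S = {α, α+1, …, ω} with α ∈ ℤ ∪ {−∞}, ω ∈ ℤ ∪ {∞}, α ≤ ω; (ii) there exist a polynomial p₁ of degree at most one and a polynomial q of degree at most two such that [Δp(j−1)] q(j−1) = p₁(j) p(j) for all j ∈ S; (iii) for these polynomials there exists a constant μ such that p₁(j) + Δq(j−1) = μ − j for all j ∈ S, where additionally μ = E X in case ω < ∞. Moreover, in this case X ∼ CO(μ; q) with the μ and q of (b). -/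

import Mathlib

open scoped Classical

noncomputable section

/-- `p` is a probability mass function on `ℤ`. -/
def IsPMF (p : ℤ → ℝ) : Prop := (∀ j, 0 ≤ p j) ∧ HasSum p 1

/-- The support `S(X) = {j : p j > 0}` of a pmf. -/
def supp (p : ℤ → ℝ) : Set ℤ := {j | 0 < p j}

/-- The cumulative sum `∑_{k ≤ j} (μ - k) p k`. -/
def cumul (p : ℤ → ℝ) (μ : ℝ) (j : ℤ) : ℝ :=
  ∑' k : {k : ℤ // k ≤ j}, (μ - (k.1 : ℝ)) * p k.1

/-- Expectation `E h(X) = ∑_j h j * p j`. -/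
def Ex (p h : ℤ → ℝ) : ℝ := ∑' j : ℤ, h j * p j

/-- `E |X|^r < ∞`. -/
def FinAbsMoment (p : ℤ → ℝ) (r : ℕ) : Prop :=
  Summable (fun j : ℤ => |(j : ℝ)| ^ r * p j)

/-- `X ∼ CO(μ; q)` for a general weight `q : ℤ → ℝ`:
`p` is a pmf with finite mean `μ` satisfying `∑_{k ≤ j}(μ-k)p k = q j * p j` for all `j`. -/
def COf (p : ℤ → ℝ) (μ : ℝ) (q : ℤ → ℝ) : Prop :=
  IsPMF p ∧ Summable (fun j : ℤ => |(j : ℝ)| * p j) ∧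
    (∑' j : ℤ, (j : ℝ) * p j) = μ ∧ ∀ j : ℤ, cumul p μ j = q j * p j

/-- The real quadratic `δ x² + β x + γ`. -/
def quadR (δ β γ : ℝ) (x : ℝ) : ℝ := δ * x ^ 2 + β * x + γ

/-- The quadratic on the integers. -/
def quad (δ β γ : ℝ) (j : ℤ) : ℝ := quadR δ β γ (j : ℝ)

/-- `X ∼ CO(μ; δ, β, γ)`, the cumulative Ord family. -/
def CO (p : ℤ → ℝ) (μ δ β γ : ℝ) : Prop := COf p μ (quad δ β γ)

/-- The `k`-th ascending power `f^{[k]}(j) = f(j) f(j+1) ⋯ f(j+k-1)`. -/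
def ascPow (q : ℤ → ℝ) (k : ℕ) (j : ℤ) : ℝ := ∏ t ∈ Finset.range k, q (j + (t : ℤ))

/-- Forward difference `Δ f (j) = f (j+1) - f j`. -/
def fwd (f : ℤ → ℝ) (j : ℤ) : ℝ := f (j + 1) - f j

/-- Iterated forward difference `Δ^k`. -/
def fwdIter (k : ℕ) (f : ℤ → ℝ) : ℤ → ℝ := fwd^[k] f

/-- Descending factorial `(x)_r = x (x-1) ⋯ (x-r+1)`. -/
def dFact (x : ℝ) (r : ℕ) : ℝ := ∏ t ∈ Finset.range r, (x - (t : ℝ))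

/-- Ascending factorial `[x]_k = x (x+1) ⋯ (x+k-1)`. -/
def aFact (x : ℝ) (k : ℕ) : ℝ := ∏ t ∈ Finset.range k, (x + (t : ℝ))

/-- `m ≤ M(X) = |S(X)| - 1`, i.e. the support has at least `m+1` points. -/
def SuppAtLeast (p : ℤ → ℝ) (m : ℕ) : Prop :=
  ∃ T : Finset ℤ, T.card = m + 1 ∧ ↑T ⊆ supp p

/-- Rodrigues polynomial `P_k(j) = (-1)^k Δ^k [q^{[k]}(j-k) p(j-k)] / p(j)`. -/
def RodP (p q : ℤ → ℝ) (k : ℕ) (j : ℤ) : ℝ :=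
  ((-1 : ℝ) ^ k * fwdIter k (fun x => ascPow q k (x - (k : ℤ)) * p (x - (k : ℤ))) j) / p j

/-- `c_k(δ) = ∏_{j=k-1}^{2k-2} (1 - jδ)`. -/
def ckc (δ : ℝ) (k : ℕ) : ℝ := ∏ t ∈ Finset.range k, (1 - ((k - 1 + t : ℕ) : ℝ) * δ)

/-- `A_k(μ; q) = E q^{[k]}(X)`. -/
def Ak (p q : ℤ → ℝ) (k : ℕ) : ℝ := Ex p (ascPow q k)

/-- The standardized Rodrigues polynomial `φ_k = P_k / (k! c_k(δ) A_k)^{1/2}`. -/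
def phi (p q : ℤ → ℝ) (δ : ℝ) (k : ℕ) (j : ℤ) : ℝ :=
  RodP p q k j / Real.sqrt ((k.factorial : ℝ) * ckc δ k * Ak p q k)

/-- The pmf `p_i(j) = q^{[i]}(j) p(j) / E q^{[i]}(X)` of `X_i`. -/
def pmfI (p q : ℤ → ℝ) (i : ℕ) (j : ℤ) : ℝ := ascPow q i j * p j / Ak p q i

/-- `μ_i = (δ i² + β i + μ)/(1 - 2iδ)`. -/
def muI (μ δ β : ℝ) (i : ℕ) : ℝ := (δ * (i : ℝ) ^ 2 + β * i + μ) / (1 - 2 * i * δ)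

/-- `q_i(j) = q(j + i)/(1 - 2iδ)`. -/
def qI (δ β γ : ℝ) (i : ℕ) (j : ℤ) : ℝ :=
  quad δ β γ (j + (i : ℤ)) / (1 - 2 * (i : ℝ) * δ)

/-- `δ_i = δ/(1 - 2iδ)`, the leading coefficient of `q_i`. -/
def deltaI (δ : ℝ) (i : ℕ) : ℝ := δ / (1 - 2 * (i : ℝ) * δ)

/-- Variance of `g(X)`. -/
def varOf (p g : ℤ → ℝ) : ℝ := Ex p (fun j => g j ^ 2) - (Ex p g) ^ 2

/-- `b_{j;k} = ∑_{i ≥ j} [j-i]_k a_i`. -/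
def bSeq (a : ℤ → ℝ) (k : ℕ) (j : ℤ) : ℝ :=
  ∑' i : {i : ℤ // j ≤ i}, aFact ((j : ℝ) - (i.1 : ℝ)) k * a i.1

/-- Membership in the class `ℋ^{m,n}(X)`. -/
def inH (p q g : ℤ → ℝ) (m n : ℕ) : Prop :=
  Summable (fun j : ℤ => ascPow q n j * fwdIter n g j ^ 2 * p j) ∧
  Summable (fun j : ℤ => ascPow q m j * |fwdIter m g j| * p j)

/-- The constant `κ_i`. -/
def kappa (p : ℤ → ℝ) (δ β γ : ℝ) (m n i : ℕ) : ℝ :=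
  (m.choose i : ℝ) * (∏ t ∈ Finset.range n, (1 - ((m + i + t : ℕ) : ℝ) * δ)) /
    (dFact ((m : ℝ) + n) i * Ak p (quad δ β γ) i * ckc δ i *
      ∏ t ∈ Finset.range n, (1 - ((m + t : ℕ) : ℝ) * δ))

/-- The constant `ν_i`. -/
def nuC (δ : ℝ) (m n i : ℕ) : ℝ :=
  (n.choose i : ℝ) /
    (dFact ((m : ℝ) + n) i * ∏ t ∈ Finset.range i, (1 - ((m + t : ℕ) : ℝ) * δ))

/-- The variance bound `S_{m,n}(g)`. -/
def Smn (p : ℤ → ℝ) (δ β γ : ℝ) (g : ℤ → ℝ) (m n : ℕ) : ℝ :=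
  (∑ i ∈ Finset.Icc 1 m, kappa p δ β γ m n i *
      Ex p (fun j => ascPow (quad δ β γ) i j * fwdIter i g j) ^ 2) +
  ∑ i ∈ Finset.Icc 1 n, (-1 : ℝ) ^ (i - 1) * nuC δ m n i *
      Ex p (fun j => ascPow (quad δ β γ) i j * fwdIter i g j ^ 2)

/-- `M(X)` when the support is finite. -/
def Mnum (p : ℤ → ℝ) : ℕ := (supp p).ncard - 1

/-- The constant `ζ_{m₁,m₂,n}`. -/
def zeta (p : ℤ → ℝ) (δ : ℝ) (m₁ m₂ n : ℕ) : ℝ :=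
  if (supp p).Finite then
    (dFact ((m₂ : ℝ) + n) n * dFact ((Mnum p : ℝ) - m₁ - 1) n *
        (∏ t ∈ Finset.range n, (1 - ((m₂ + t : ℕ) : ℝ) * δ)) *
        ∏ t ∈ Finset.range n, (1 - ((m₁ + Mnum p + t : ℕ) : ℝ) * δ)) /
      (dFact ((m₁ : ℝ) + n) n * dFact ((Mnum p : ℝ) - m₂ - 1) n *
        (∏ t ∈ Finset.range n, (1 - ((m₁ + t : ℕ) : ℝ) * δ)) *
        ∏ t ∈ Finset.range n, (1 - ((m₂ + Mnum p + t : ℕ) : ℝ) * δ))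
  else
    (dFact ((m₂ : ℝ) + n) n * ∏ t ∈ Finset.range n, (1 - ((m₂ + t : ℕ) : ℝ) * δ)) /
      (dFact ((m₁ : ℝ) + n) n * ∏ t ∈ Finset.range n, (1 - ((m₁ + t : ℕ) : ℝ) * δ))

open Filter in
private lemma cumul_eq_tsum_ind (p : ℤ → ℝ) (μ : ℝ) (j : ℤ) :
    cumul p μ j
      = ∑' k : ℤ, ({k : ℤ | k ≤ j}).indicator (fun k : ℤ => (μ - k) * p k) k :=
  tsum_subtype {k : ℤ | k ≤ j} (fun k : ℤ => (μ - k) * p k)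

private lemma summable_F (p : ℤ → ℝ) (hp0 : ∀ j, 0 ≤ p j) (hsum : Summable p)
    (hmean : Summable (fun j : ℤ => |(j : ℝ)| * p j)) (μ : ℝ) :
    Summable (fun k : ℤ => (μ - k) * p k) := by
  refine Summable.of_norm (Summable.of_nonneg_of_le (fun j => norm_nonneg _) (fun j => ?_)
    ((hsum.mul_left |μ|).add hmean))
  have h1 : |μ - (j : ℝ)| ≤ |μ| + |(j : ℝ)| := by
    calc |μ - (j : ℝ)| = |μ + (-(j:ℝ))| := by ring_nf
    _ ≤ |μ| + |(-(j:ℝ))| := abs_add_le _ _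
    _ = |μ| + |(j : ℝ)| := by rw [abs_neg]
  have h2 : ‖(μ - (j:ℝ)) * p j‖ = |μ - (j:ℝ)| * p j := by
    rw [Real.norm_eq_abs, abs_mul, abs_of_nonneg (hp0 j)]
  rw [h2]
  have := mul_le_mul_of_nonneg_right h1 (hp0 j)
  nlinarith [hp0 j]

private lemma cumul_add_tail (p : ℤ → ℝ) (μ : ℝ)
    (hF : Summable (fun k : ℤ => (μ - k) * p k)) (j : ℤ) :
    cumul p μ j + ∑' k : ℤ, ({k : ℤ | j < k}).indicator (fun k : ℤ => (μ - k) * p k) k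
      = ∑' k : ℤ, (μ - k) * p k := by
  rw [cumul_eq_tsum_ind, ← Summable.tsum_add (hF.indicator _) (hF.indicator _)]
  refine tsum_congr fun k => ?_
  by_cases h : k ≤ j
  · simp [Set.indicator_apply, h, not_lt.2 h]
  · simp [Set.indicator_apply, h, not_le.1 h]

private lemma cumul_succ (p : ℤ → ℝ) (μ : ℝ)
    (hF : Summable (fun k : ℤ => (μ - k) * p k)) (j : ℤ) :
    cumul p μ j = cumul p μ (j - 1) + (μ - j) * p j := by
  rw [cumul_eq_tsum_ind, cumul_eq_tsum_ind]
  have h1 : ∀ k : ℤ, ({k : ℤ | k ≤ j}).indicator (fun k : ℤ => (μ - k) * p k) k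
      = ({k : ℤ | k ≤ j - 1}).indicator (fun k : ℤ => (μ - k) * p k) k
        + (if k = j then (μ - (j:ℝ)) * p j else 0) := by
    intro k
    by_cases hkj : k = j
    · subst hkj
      have h2 : ¬ (k ≤ k - 1) := by omega
      simp [Set.indicator_apply, h2]
    · by_cases hk : k ≤ j - 1
      · have h3 : k ≤ j := by omega
        simp [Set.indicator_apply, hk, h3, hkj]
        exact fun h => absurd h (by omega)
      · have h3 : ¬ k ≤ j := by omega
        simp [Set.indicator_apply, hk, h3, hkj]
        exact fun h => absurd h (by omega)
  rw [tsum_congr h1, Summable.tsum_add (hF.indicator _) ⟨_, hasSum_ite_eq j ((μ - (j:ℝ)) * p j)⟩,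
    tsum_ite_eq]

private lemma ind_abs (G : ℤ → ℝ) (s : Set ℤ) (k : ℤ) :
    |s.indicator G k| = s.indicator (fun k => |G k|) k := by
  by_cases h : k ∈ s <;> simp [Set.indicator_apply, h]

private lemma abs_tsum_ind_le (G : ℤ → ℝ) (hG : Summable G) (s : Set ℤ) :
    |∑' k : ℤ, s.indicator G k| ≤ ∑' k : ℤ, s.indicator (fun k => |G k|) k := by
  have h1 : Summable fun k : ℤ => ‖s.indicator G k‖ := by
    refine (hG.abs.indicator s).congr fun k => ?_
    rw [Real.norm_eq_abs, ind_abs]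
  have h2 := norm_tsum_le_tsum_norm h1
  rw [Real.norm_eq_abs] at h2
  refine h2.trans (le_of_eq (tsum_congr fun k => ?_))
  rw [Real.norm_eq_abs, ind_abs]

open Filter in
private lemma tails_small (F : ℤ → ℝ) (hF : Summable F) (ε : ℝ) (hε : 0 < ε) :
    ∃ N : ℤ, 1 ≤ N ∧
      (∀ j : ℤ, j ≤ -N → ∑' k : ℤ, ({k : ℤ | k ≤ j}).indicator (fun k => |F k|) k ≤ ε) ∧
      (∀ j : ℤ, N ≤ j → ∑' k : ℤ, ({k : ℤ | j < k}).indicator (fun k => |F k|) k ≤ ε) := by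
  have habs : Summable fun k : ℤ => |F k| := hF.abs
  have h1 : Tendsto (fun t : Finset ℤ => ∑ k ∈ t, |F k|) atTop (nhds (∑' k, |F k|)) :=
    habs.hasSum
  have h2 : ∀ᶠ t : Finset ℤ in atTop, ∑' k, |F k| - ε < ∑ k ∈ t, |F k| :=
    h1.eventually (eventually_gt_nhds (by linarith))
  obtain ⟨s₀, hs₀⟩ := eventually_atTop.1 h2
  have hs : ∑' k, |F k| - ε < ∑ k ∈ s₀, |F k| := hs₀ s₀ le_rfl
  have hcompl : ∑' k : ℤ, ((↑s₀ : Set ℤ)ᶜ).indicator (fun k => |F k|) k ≤ ε := by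
    have h3 := Summable.sum_add_tsum_compl (s := s₀) habs
    have h4 : ∑' (x : ↑((↑s₀ : Set ℤ)ᶜ)), |F ↑x|
        = ∑' k : ℤ, ((↑s₀ : Set ℤ)ᶜ).indicator (fun k => |F k|) k :=
      tsum_subtype ((↑s₀ : Set ℤ)ᶜ) (fun k => |F k|)
    rw [h4] at h3
    linarith
  have key : ∀ s : Set ℤ, s ⊆ (↑s₀ : Set ℤ)ᶜ →
      ∑' k : ℤ, s.indicator (fun k => |F k|) k ≤ ε := by
    intro s hsub
    refine le_trans (Summable.tsum_le_tsum (fun k => ?_) (habs.indicator _) (habs.indicator _)) hcompl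
    exact Set.indicator_le_indicator_of_subset hsub (fun k => abs_nonneg _) k
  refine ⟨((s₀.sup (fun k => k.natAbs) : ℕ) : ℤ) + 1, by omega, fun j hj => key _ ?_,
    fun j hj => key _ ?_⟩
  · intro k hk
    simp only [Set.mem_setOf_eq] at hk
    intro hmem
    have h5 : k.natAbs ≤ s₀.sup (fun k => k.natAbs) := Finset.le_sup hmem
    omega
  · intro k hk
    simp only [Set.mem_setOf_eq] at hk
    intro hmem
    have h5 : k.natAbs ≤ s₀.sup (fun k => k.natAbs) := Finset.le_sup hmem
    omega

private lemma abs_cumul_le (p : ℤ → ℝ) (μ : ℝ)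
    (hF : Summable (fun k : ℤ => (μ - k) * p k)) (j : ℤ) :
    |cumul p μ j|
      ≤ ∑' k : ℤ, ({k : ℤ | k ≤ j}).indicator (fun k : ℤ => |(μ - k) * p k|) k := by
  rw [cumul_eq_tsum_ind]
  exact abs_tsum_ind_le _ hF _

private lemma harmonic_contra (p : ℤ → ℝ) (hp0 : ∀ j, 0 ≤ p j)
    (hmean : Summable (fun j : ℤ => |(j : ℝ)| * p j))
    (δ β γ c : ℝ) (hc : 0 < c) (e : ℕ → ℤ) (he : Function.Injective e) (C : ℕ)
    (hlb : ∀ n : ℕ, (n : ℝ) + 1 ≤ |(e n : ℝ)|)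
    (hub : ∀ n : ℕ, |(e n : ℝ)| ≤ (n : ℝ) + C)
    (hlow : ∀ n : ℕ, c ≤ |quad δ β γ (e n) * p (e n)|) : False := by
  set K := |δ| + |β| + |γ| + 1 with hK
  have hKpos : 0 < K := by positivity
  have key : ∀ n : ℕ, c / K * (1 / ((n : ℝ) + C + 1)) ≤ |(e n : ℝ)| * p (e n) := by
    intro n
    set x : ℝ := ((e n : ℤ) : ℝ) with hx
    have h1 : 1 ≤ |x| := le_trans (by linarith [n.cast_nonneg (α := ℝ)]) (hlb n)
    have h2 : |quad δ β γ (e n)| ≤ K * |x| ^ 2 := by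
      have t1 : |δ * x ^ 2 + β * x + γ| ≤ |δ| * |x| ^ 2 + |β| * |x| + |γ| := by
        calc |δ * x ^ 2 + β * x + γ| ≤ |δ * x ^ 2 + β * x| + |γ| := abs_add_le _ _
          _ ≤ |δ * x ^ 2| + |β * x| + |γ| := by linarith [abs_add_le (δ * x ^ 2) (β * x)]
          _ = |δ| * |x| ^ 2 + |β| * |x| + |γ| := by
              rw [abs_mul, abs_mul, abs_pow]
      refine le_trans t1 ?_
      have h1a : |x| ≤ |x| ^ 2 := by nlinarith
      have h1b : 1 ≤ |x| ^ 2 := by nlinarith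
      have h1c := mul_le_mul_of_nonneg_left h1a (abs_nonneg β)
      have h1d := mul_le_mul_of_nonneg_left h1b (abs_nonneg γ)
      nlinarith [sq_nonneg x, abs_nonneg x]
    have h3 : c ≤ K * |x| ^ 2 * p (e n) := by
      have := hlow n
      rw [abs_mul, abs_of_nonneg (hp0 (e n))] at this
      nlinarith [hp0 (e n), abs_nonneg (quad δ β γ (e n))]
    have h4 : c / K ≤ |x| ^ 2 * p (e n) := by
      rw [div_le_iff₀ hKpos]
      nlinarith
    have h5 : |x| ≤ (n : ℝ) + C + 1 := le_trans (hub n) (by linarith)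
    rw [mul_one_div, div_le_iff₀ (by positivity : (0:ℝ) < (n : ℝ) + C + 1)]
    have h6 := mul_le_mul_of_nonneg_right h5 (mul_nonneg (abs_nonneg x) (hp0 (e n)))
    nlinarith [h4, h6]
  have hs1 : Summable (fun n : ℕ => |(e n : ℝ)| * p (e n)) :=
    hmean.comp_injective he
  have hs2 : Summable (fun n : ℕ => c / K * (1 / ((n : ℝ) + C + 1))) :=
    Summable.of_nonneg_of_le (fun n => by positivity) key hs1
  have hs3 : Summable (fun n : ℕ => 1 / ((n : ℝ) + C + 1)) := by
    have := hs2.mul_left (K / c)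
    refine this.congr fun n => ?_
    field_simp
  have hs4 : Summable (fun n : ℕ => (fun m : ℕ => 1 / (m : ℝ)) (n + (C + 1))) := by
    refine hs3.congr fun n => ?_
    push_cast
    ring_nf
  exact Real.not_summable_one_div_natCast
    ((summable_nat_add_iff (f := fun m : ℕ => 1 / (m : ℝ)) (C + 1)).1 hs4)

private lemma harmonic_contra_bot (p : ℤ → ℝ) (hp0 : ∀ j, 0 ≤ p j)
    (hmean : Summable (fun j : ℤ => |(j : ℝ)| * p j))
    (δ β γ c : ℝ) (hc : 0 < c) (N₀ : ℤ) (hN₀ : N₀ ≤ -1)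
    (hlow : ∀ n : ℕ, c ≤ |quad δ β γ (N₀ - n) * p (N₀ - n)|) : False := by
  refine harmonic_contra p hp0 hmean δ β γ c hc (fun n => N₀ - n)
    (fun n1 n2 h => by simp only at h; omega) N₀.natAbs (fun n => ?_) (fun n => ?_) hlow
  all_goals
    have h5 : (N₀ - (n:ℤ)) = -((n:ℤ) + (N₀.natAbs : ℤ)) := by omega
    have h2 : |((N₀ - (n:ℤ) : ℤ) : ℝ)| = (n : ℝ) + (N₀.natAbs : ℝ) := by
      rw [h5]
      push_cast [Nat.cast_natAbs]
      rw [abs_neg, abs_of_nonneg (by positivity)]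
    rw [h2]
  · have h3 : (1 : ℝ) ≤ (N₀.natAbs : ℝ) := by
      have h4 : (1 : ℤ) ≤ (N₀.natAbs : ℤ) := by omega
      exact_mod_cast h4
    linarith

private lemma harmonic_contra_top (p : ℤ → ℝ) (hp0 : ∀ j, 0 ≤ p j)
    (hmean : Summable (fun j : ℤ => |(j : ℝ)| * p j))
    (δ β γ c : ℝ) (hc : 0 < c) (N₀ : ℤ) (hN₀ : 1 ≤ N₀)
    (hlow : ∀ n : ℕ, c ≤ |quad δ β γ (N₀ + n) * p (N₀ + n)|) : False := by
  refine harmonic_contra p hp0 hmean δ β γ c hc (fun n => N₀ + n)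
    (fun n1 n2 h => by simp only at h; omega) N₀.natAbs (fun n => ?_) (fun n => ?_) hlow
  all_goals
    have h5 : (N₀ + (n:ℤ)) = ((n:ℤ) + (N₀.natAbs : ℤ)) := by omega
    have h2 : |((N₀ + (n:ℤ) : ℤ) : ℝ)| = (n : ℝ) + (N₀.natAbs : ℝ) := by
      rw [h5]
      push_cast [Nat.cast_natAbs]
      rw [abs_of_nonneg (by positivity)]
    rw [h2]
  · have h3 : (1 : ℝ) ≤ (N₀.natAbs : ℝ) := by
      have h4 : (1 : ℤ) ≤ (N₀.natAbs : ℤ) := by omega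
      exact_mod_cast h4
    linarith

private lemma backward (p : ℤ → ℝ) (hp : IsPMF p)
    (hmean : Summable (fun j : ℤ => |(j : ℝ)| * p j))
    (a b δ β γ μ : ℝ)
    (hchain : ∀ j₁ j₂ j : ℤ, j₁ ∈ supp p → j₂ ∈ supp p → j₁ ≤ j → j ≤ j₂ → j ∈ supp p)
    (hii : ∀ j ∈ supp p, (p j - p (j - 1)) * quad δ β γ (j - 1) = (a + b * j) * p j)
    (hiii : ∀ j ∈ supp p, (a + b * j) + (quad δ β γ j - quad δ β γ (j - 1)) = μ - j)
    (hbound : (∃ ω : ℤ, ∀ j ∈ supp p, j ≤ ω) → μ = ∑' j : ℤ, (j : ℝ) * p j) :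
    CO p μ δ β γ := by
  obtain ⟨hp0, hps⟩ := hp
  have hsum : Summable p := hps.summable
  have hF : Summable (fun k : ℤ => (μ - k) * p k) := summable_F p hp0 hsum hmean μ
  have hjp : Summable (fun j : ℤ => (j : ℝ) * p j) := by
    refine Summable.of_norm (hmean.congr fun j => ?_)
    rw [Real.norm_eq_abs, abs_mul, abs_of_nonneg (hp0 j)]
  set m : ℝ := ∑' j : ℤ, (j : ℝ) * p j with hm
  have htotal : ∑' k : ℤ, (μ - k) * p k = μ - m := by
    have h1 : ∀ k : ℤ, (μ - (k:ℝ)) * p k = μ * p k - (k:ℝ) * p k := fun k => by ring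
    rw [tsum_congr h1, Summable.tsum_sub (hsum.mul_left μ) hjp, tsum_mul_left, hps.tsum_eq, mul_one]
  have hzero : ∀ j : ℤ, j ∉ supp p → p j = 0 := fun j hj => le_antisymm (not_lt.1 hj) (hp0 j)
  have hGd : ∀ j ∈ supp p, quad δ β γ j * p j - quad δ β γ (j - 1) * p (j - 1)
      = (μ - j) * p j := by
    intro j hj
    linear_combination (hii j hj) + p j * (hiii j hj)
  have hDd : ∀ j ∈ supp p,
      cumul p μ j - quad δ β γ j * p j
        = cumul p μ (j - 1) - quad δ β γ (j - 1) * p (j - 1) := by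
    intro j hj
    have h1 := cumul_succ p μ hF j
    have h2 := hGd j hj
    linarith
  have hne : ∃ j : ℤ, j ∈ supp p := by
    by_contra h
    push_neg at h
    have h1 : ∀ j, p j = 0 := fun j => hzero j (h j)
    have h2 : ∑' j : ℤ, p j = 0 := by simp [h1]
    rw [hps.tsum_eq] at h2
    norm_num at h2
  obtain ⟨j₀, hj₀⟩ := hne
  have hcz : ∀ j : ℤ, (∀ k : ℤ, k ≤ j → p k = 0) → cumul p μ j = 0 := by
    intro j h
    rw [cumul_eq_tsum_ind]
    have h1 : ∀ k : ℤ, ({k : ℤ | k ≤ j}).indicator (fun k : ℤ => (μ - k) * p k) k = 0 := by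
      intro k
      by_cases hk : k ≤ j
      · simp [Set.indicator_apply, hk, h k hk]
      · simp [Set.indicator_apply, hk]
    rw [tsum_congr h1, tsum_zero]
  -- cumul = q * p on the support
  have HD : ∀ j ∈ supp p, cumul p μ j = quad δ β γ j * p j := by
    by_cases hbl : ∃ α : ℤ, ∀ k ∈ supp p, α ≤ k
    · -- support bounded below : take the least element
      obtain ⟨α, hα, hαle⟩ := Int.exists_least_of_bdd (P := fun z => z ∈ supp p)
        (by obtain ⟨α, h⟩ := hbl; exact ⟨α, fun z hz => h z hz⟩) ⟨j₀, hj₀⟩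
      have hbase : cumul p μ (α - 1) - quad δ β γ (α - 1) * p (α - 1) = 0 := by
        have h1 : p (α - 1) = 0 := hzero _ (fun h => by have := hαle _ h; omega)
        have h2 : cumul p μ (α - 1) = 0 :=
          hcz _ (fun k hk => hzero _ (fun h => by have := hαle _ h; omega))
        rw [h1, h2]
        ring
      have hstep : ∀ nn : ℕ, (∀ k : ℤ, α ≤ k → k ≤ α - 1 + nn → k ∈ supp p) →
          cumul p μ (α - 1 + nn) - quad δ β γ (α - 1 + nn) * p (α - 1 + nn) = 0 := by
        intro nn
        induction nn with
        | zero => intro _; simpa using hbase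
        | succ n ih =>
          intro hall
          have hmemn : α - 1 + (n : ℤ) + 1 ∈ supp p := hall _ (by omega) (by push_cast; omega)
          have h1 := hDd _ hmemn
          have h2 : α - 1 + (n : ℤ) + 1 - 1 = α - 1 + (n : ℤ) := by ring
          rw [h2] at h1
          have h3 : α - 1 + ((n + 1 : ℕ) : ℤ) = α - 1 + (n : ℤ) + 1 := by push_cast; ring
          rw [h3, h1]
          exact ih (fun k hk1 hk2 => hall k hk1 (by omega))
      intro j hj
      obtain ⟨nn, hnn⟩ : ∃ nn : ℕ, (nn : ℤ) = j - (α - 1) :=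
        ⟨(j - (α - 1)).toNat, Int.toNat_of_nonneg (by have := hαle j hj; omega)⟩
      have h4 : α - 1 + (nn : ℤ) = j := by omega
      have h5 := hstep nn (fun k hk1 hk2 => hchain α j k hα hj hk1 (by omega))
      rw [h4] at h5
      linarith
    · -- support unbounded below
      push_neg at hbl
      have hall : ∀ j ∈ supp p, ∀ k : ℤ, k ≤ j → k ∈ supp p := by
        intro j hj k hk
        obtain ⟨k', hk', hk'lt⟩ := hbl k
        exact hchain k' j k hk' hj (by omega) hk
      intro j hj
      have hDc : ∀ n : ℕ, cumul p μ (j - n) - quad δ β γ (j - n) * p (j - n)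
          = cumul p μ j - quad δ β γ j * p j := by
        intro n
        induction n with
        | zero => simp
        | succ n ih =>
          have h1 : j - ((n + 1 : ℕ) : ℤ) = (j - (n : ℕ)) - 1 := by push_cast; ring
          have h2 := hDd (j - (n : ℕ)) (hall j hj _ (by omega))
          rw [h1, ← h2]
          exact ih
      by_contra hc0
      set c := cumul p μ j - quad δ β γ j * p j with hcdef
      have hcne : c ≠ 0 := sub_ne_zero.2 hc0
      have hcpos : 0 < |c| / 2 := by positivity
      obtain ⟨N, hN1, hNbot, _⟩ := tails_small _ hF (|c| / 2) hcpos
      set N₀ : ℤ := min (-N) (min j (-1)) with hN₀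
      have hN₀a : N₀ ≤ -N := min_le_left _ _
      have hN₀b : N₀ ≤ j := le_trans (min_le_right _ _) (min_le_left _ _)
      have hN₀c : N₀ ≤ -1 := le_trans (min_le_right _ _) (min_le_right _ _)
      refine harmonic_contra_bot p hp0 hmean δ β γ (|c| / 2) hcpos N₀ hN₀c fun n => ?_
      obtain ⟨mm, hmeq⟩ : ∃ mm : ℕ, (mm : ℤ) = j - (N₀ - n) :=
        ⟨(j - (N₀ - n)).toNat, Int.toNat_of_nonneg (by omega)⟩
      have h1 : N₀ - (n : ℤ) = j - (mm : ℕ) := by omega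
      have h2 := hDc mm
      rw [← h1] at h2
      have h3 : |cumul p μ (N₀ - (n : ℤ))| ≤ |c| / 2 :=
        le_trans (abs_cumul_le p μ hF _) (hNbot _ (by omega))
      have h4 : quad δ β γ (N₀ - (n:ℤ)) * p (N₀ - (n:ℤ)) = cumul p μ (N₀ - (n:ℤ)) - c := by
        rw [hcdef] at h2 ⊢
        linarith
      rw [h4]
      calc |c| / 2 = |c| - |c| / 2 := by ring
        _ ≤ |c| - |cumul p μ (N₀ - (n:ℤ))| := by linarith
        _ ≤ |cumul p μ (N₀ - (n:ℤ)) - c| := by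
            have h5 := abs_sub_abs_le_abs_sub c (c - cumul p μ (N₀ - (n:ℤ)))
            have h6 : c - (c - cumul p μ (N₀ - (n:ℤ))) = cumul p μ (N₀ - (n:ℤ)) := by ring
            rw [h6] at h5
            have h7 : |c - cumul p μ (N₀ - (n:ℤ))| = |cumul p μ (N₀ - (n:ℤ)) - c| :=
              abs_sub_comm _ _
            linarith
  -- the mean equals μ
  have hμm : μ = m := by
    by_cases hbd : ∃ ω : ℤ, ∀ j ∈ supp p, j ≤ ω
    · exact hbound hbd
    · push_neg at hbd
      have hallup : ∀ j : ℤ, j₀ ≤ j → j ∈ supp p := by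
        intro j hj
        obtain ⟨k, hk, hklt⟩ := hbd j
        exact hchain j₀ k j hj₀ hk hj (by omega)
      by_contra hne2
      have hcne : μ - m ≠ 0 := sub_ne_zero.2 hne2
      have hcpos : 0 < |μ - m| / 2 := by positivity
      obtain ⟨N, hN1, _, hNtop⟩ := tails_small _ hF (|μ - m| / 2) hcpos
      set N₀ : ℤ := max N (max j₀ 1) with hN₀
      have hN₀a : N ≤ N₀ := le_max_left _ _
      have hN₀b : j₀ ≤ N₀ := le_trans (le_max_left _ _) (le_max_right _ _)
      have hN₀c : 1 ≤ N₀ := le_trans (le_max_right _ _) (le_max_right _ _)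
      refine harmonic_contra_top p hp0 hmean δ β γ (|μ - m| / 2) hcpos N₀ hN₀c fun n => ?_
      have hjsupp : N₀ + (n : ℤ) ∈ supp p := hallup _ (by omega)
      have h1 : cumul p μ (N₀ + n) = quad δ β γ (N₀ + n) * p (N₀ + n) := HD _ hjsupp
      have h2 : |cumul p μ (N₀ + (n:ℤ)) - (μ - m)| ≤ |μ - m| / 2 := by
        have h3 := cumul_add_tail p μ hF (N₀ + n)
        rw [htotal] at h3
        have h4 : |∑' k : ℤ, ({k : ℤ | N₀ + (n:ℤ) < k}).indicator
            (fun k : ℤ => (μ - k) * p k) k| ≤ |μ - m| / 2 :=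
          le_trans (abs_tsum_ind_le _ hF _) (hNtop _ (by omega))
        have h5 : cumul p μ (N₀ + (n:ℤ)) - (μ - m)
            = -(∑' k : ℤ, ({k : ℤ | N₀ + (n:ℤ) < k}).indicator
                (fun k : ℤ => (μ - k) * p k) k) := by linarith
        rw [h5, abs_neg]
        exact h4
      rw [← h1]
      calc |μ - m| / 2 = |μ - m| - |μ - m| / 2 := by ring
        _ ≤ |μ - m| - |cumul p μ (N₀ + (n:ℤ)) - (μ - m)| := by linarith
        _ ≤ |cumul p μ (N₀ + (n:ℤ))| := by
            have h6 := abs_sub_abs_le_abs_sub (μ - m) (μ - m - cumul p μ (N₀ + (n:ℤ)))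
            have h7 : μ - m - (μ - m - cumul p μ (N₀ + (n:ℤ)))
                = cumul p μ (N₀ + (n:ℤ)) := by ring
            rw [h7] at h6
            have h8 : |μ - m - cumul p μ (N₀ + (n:ℤ))|
                = |cumul p μ (N₀ + (n:ℤ)) - (μ - m)| := abs_sub_comm _ _
            linarith
  -- assemble
  unfold CO COf
  refine ⟨⟨hp0, hps⟩, hmean, hμm.symm, ?_⟩
  intro j
  by_cases hj : j ∈ supp p
  · exact HD j hj
  · by_cases hlow2 : ∀ k : ℤ, k ≤ j → p k = 0
    · rw [hcz j hlow2, hzero j hj, mul_zero]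
    · push_neg at hlow2
      obtain ⟨k, hk, hkne⟩ := hlow2
      have hksupp : k ∈ supp p := lt_of_le_of_ne (hp0 k) (Ne.symm hkne)
      have htail0 : ∑' k : ℤ, ({k : ℤ | j < k}).indicator
          (fun k : ℤ => (μ - k) * p k) k = 0 := by
        have h1 : ∀ i : ℤ, ({k : ℤ | j < k}).indicator (fun k : ℤ => (μ - k) * p k) i = 0 := by
          intro i
          by_cases hi : j < i
          · have hip : p i = 0 := by
              refine hzero i fun hisupp => hj (hchain k i j hksupp hisupp hk (by omega))
            simp [Set.indicator_apply, hi, hip]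
          · simp [Set.indicator_apply, hi]
        rw [tsum_congr h1, tsum_zero]
      have h3 := cumul_add_tail p μ hF j
      rw [htail0, htotal, add_zero] at h3
      rw [h3, hzero j hj, mul_zero, hμm]
      ring

private lemma forward_chain (p : ℤ → ℝ) (hp : IsPMF p)
    (hmean : Summable (fun j : ℤ => |(j : ℝ)| * p j)) (μ δ β γ : ℝ)
    (hCO : CO p μ δ β γ) :
    ∀ j₁ j₂ j : ℤ, j₁ ∈ supp p → j₂ ∈ supp p → j₁ ≤ j → j ≤ j₂ → j ∈ supp p := by
  obtain ⟨hpmf, hm1, hμ, hq⟩ := hCO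
  obtain ⟨hp0, hps⟩ := hp
  have hsum : Summable p := hps.summable
  have hF : Summable (fun k : ℤ => (μ - k) * p k) := summable_F p hp0 hsum hmean μ
  have hjp : Summable (fun j : ℤ => (j : ℝ) * p j) := by
    refine Summable.of_norm (hmean.congr fun j => ?_)
    rw [Real.norm_eq_abs, abs_mul, abs_of_nonneg (hp0 j)]
  have htotal : ∑' k : ℤ, (μ - k) * p k = 0 := by
    have h1 : ∀ k : ℤ, (μ - (k:ℝ)) * p k = μ * p k - (k:ℝ) * p k := fun k => by ring
    rw [tsum_congr h1, Summable.tsum_sub (hsum.mul_left μ) hjp, tsum_mul_left, hps.tsum_eq, mul_one, hμ]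
    ring
  intro j₁ j₂ j h₁ h₂ hle₁ hle₂
  by_contra hj
  have pj0 : p j = 0 := le_antisymm (not_lt.1 hj) (hp0 j)
  have hc0 : cumul p μ j = 0 := by rw [hq j, pj0, mul_zero]
  rcases le_or_gt μ (j : ℝ) with hcase | hcase
  · -- positive term at j₂ in the (vanishing) upper tail
    have hj₂ : j < j₂ := lt_of_le_of_ne hle₂ (fun h => hj (h ▸ h₂))
    have hT : ∑' k : ℤ, ({k : ℤ | j < k}).indicator (fun k : ℤ => (μ - k) * p k) k = 0 := by
      have h2 := cumul_add_tail p μ hF j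
      rw [hc0, htotal] at h2
      linarith
    set g : ℤ → ℝ :=
      fun k => -(({k : ℤ | j < k}).indicator (fun k : ℤ => (μ - k) * p k) k) with hg
    have hgs : Summable g := (hF.indicator _).neg
    have hgnn : ∀ k, 0 ≤ g k := by
      intro k
      by_cases hk : j < k
      · have h3 : (μ - (k:ℝ)) ≤ 0 := by
          have h4 : (j:ℝ) < (k:ℝ) := by exact_mod_cast hk
          linarith
        have h5 : ({k : ℤ | j < k}).indicator (fun k : ℤ => (μ - k) * p k) k
            = (μ - (k:ℝ)) * p k := by simp [Set.indicator_apply, hk]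
        rw [hg]
        simp only [h5]
        nlinarith [hp0 k]
      · rw [hg]
        simp [Set.indicator_apply, hk]
    have hsum0 : ∑' k, g k = 0 := by
      rw [hg, tsum_neg, hT, neg_zero]
    have hterm := Summable.le_tsum hgs j₂ (fun k _ => hgnn k)
    have hgj₂ : 0 < g j₂ := by
      have h5 : ({k : ℤ | j < k}).indicator (fun k : ℤ => (μ - k) * p k) j₂
          = (μ - (j₂:ℝ)) * p j₂ := by simp [Set.indicator_apply, hj₂]
      rw [hg]
      simp only [h5]
      have h6 : (j:ℝ) < (j₂:ℝ) := by exact_mod_cast hj₂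
      have hp2 : 0 < p j₂ := h₂
      have h7 := mul_pos (by linarith : (0:ℝ) < (j₂:ℝ) - μ) hp2
      nlinarith [h7]
    rw [hsum0] at hterm
    linarith
  · -- positive term at j₁ in the (vanishing) cumulative sum
    set g : ℤ → ℝ :=
      fun k => ({k : ℤ | k ≤ j}).indicator (fun k : ℤ => (μ - k) * p k) k with hg
    have hgs : Summable g := hF.indicator _
    have hgnn : ∀ k, 0 ≤ g k := by
      intro k
      by_cases hk : k ≤ j
      · have h4 : (k:ℝ) ≤ (j:ℝ) := by exact_mod_cast hk
        have h5 : ({k : ℤ | k ≤ j}).indicator (fun k : ℤ => (μ - k) * p k) k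
            = (μ - (k:ℝ)) * p k := by simp [Set.indicator_apply, hk]
        rw [hg]
        simp only [h5]
        nlinarith [hp0 k]
      · rw [hg]
        simp [Set.indicator_apply, hk]
    have hsum0 : ∑' k, g k = 0 := by
      rw [hg, ← cumul_eq_tsum_ind, hc0]
    have hterm := Summable.le_tsum hgs j₁ (fun k _ => hgnn k)
    have hgj₁ : 0 < g j₁ := by
      have h5 : ({k : ℤ | k ≤ j}).indicator (fun k : ℤ => (μ - k) * p k) j₁
          = (μ - (j₁:ℝ)) * p j₁ := by simp [Set.indicator_apply, hle₁]
      rw [hg]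
      simp only [h5]
      have h6 : (j₁:ℝ) ≤ (j:ℝ) := by exact_mod_cast hle₁
      have hp1 : 0 < p j₁ := h₁
      have h7 := mul_pos (by linarith : (0:ℝ) < μ - (j₁:ℝ)) hp1
      nlinarith [h7]
    rw [hsum0] at hterm
    linarith

private lemma forward_ii (p : ℤ → ℝ) (hp : IsPMF p)
    (hmean : Summable (fun j : ℤ => |(j : ℝ)| * p j)) (μ δ β γ : ℝ)
    (hCO : CO p μ δ β γ) (j : ℤ) :
    (p j - p (j - 1)) * quad δ β γ (j - 1) = ((μ + δ - β) + (-(1 + 2 * δ)) * j) * p j := by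
  obtain ⟨hpmf, hm1, hμ, hq⟩ := hCO
  obtain ⟨hp0, hps⟩ := hp
  have hF : Summable (fun k : ℤ => (μ - k) * p k) :=
    summable_F p hp0 hps.summable hmean μ
  have hE : quad δ β γ j * p j = quad δ β γ (j - 1) * p (j - 1) + (μ - j) * p j := by
    have h1 := cumul_succ p μ hF j
    rw [hq j, hq (j - 1)] at h1
    exact h1
  simp only [quad, quadR] at hE ⊢
  push_cast at hE ⊢
  linear_combination hE

theorem stmt3 (p : ℤ → ℝ) (hp : IsPMF p)
    (hmean : Summable (fun j : ℤ => |(j : ℝ)| * p j)) :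
    ((∃ μ δ β γ : ℝ, CO p μ δ β γ) ↔
      ((∀ j₁ j₂ j : ℤ, j₁ ∈ supp p → j₂ ∈ supp p → j₁ ≤ j → j ≤ j₂ → j ∈ supp p) ∧
        ∃ a b δ β γ μ : ℝ,
          (∀ j ∈ supp p, (p j - p (j - 1)) * quad δ β γ (j - 1) = (a + b * j) * p j) ∧
          (∀ j ∈ supp p,
            (a + b * j) + (quad δ β γ j - quad δ β γ (j - 1)) = μ - j) ∧
          ((∃ ω : ℤ, ∀ j ∈ supp p, j ≤ ω) → μ = ∑' j : ℤ, (j : ℝ) * p j))) ∧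
    (∀ a b δ β γ μ : ℝ,
      (∀ j₁ j₂ j : ℤ, j₁ ∈ supp p → j₂ ∈ supp p → j₁ ≤ j → j ≤ j₂ → j ∈ supp p) →
      (∀ j ∈ supp p, (p j - p (j - 1)) * quad δ β γ (j - 1) = (a + b * j) * p j) →
      (∀ j ∈ supp p, (a + b * j) + (quad δ β γ j - quad δ β γ (j - 1)) = μ - j) →
      ((∃ ω : ℤ, ∀ j ∈ supp p, j ≤ ω) → μ = ∑' j : ℤ, (j : ℝ) * p j) →
      CO p μ δ β γ) := by
  refine ⟨⟨?_, ?_⟩, ?_⟩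
  · rintro ⟨μ, δ, β, γ, hCO⟩
    obtain ⟨hpmf, hm1, hμ, hq⟩ := hCO
    refine ⟨forward_chain p hp hmean μ δ β γ ⟨hpmf, hm1, hμ, hq⟩,
      μ + δ - β, -(1 + 2 * δ), δ, β, γ, μ,
      fun j _ => forward_ii p hp hmean μ δ β γ ⟨hpmf, hm1, hμ, hq⟩ j,
      fun j _ => ?_, fun _ => hμ.symm⟩
    simp only [quad, quadR]
    push_cast
    ring
  · rintro ⟨hchain, a, b, δ, β, γ, μ, h2, h3, h4⟩
    exact ⟨μ, δ, β, γ, backward p hp hmean a b δ β γ μ hchain h2 h3 h4⟩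
  · intro a b δ β γ μ hchain h2 h3 h4
    exact backward p hp hmean a b δ β γ μ hchain h2 h3 h4
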